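/- Let C be a symmetric monoidal category and A a monoid object in C (multiplication μ : A ⊗ A ⟶ A, unit η : 𝟙 ⟶ A) whose underlying object has a right dual Aᘁ, with coevaluation coev : 𝟙 ⟶ A ⊗ Aᘁ and evaluation ev : Aᘁ ⊗ A ⟶ 𝟙 satisfying the zigzag identities (an exact pairing). Define the trace form t : A ⟶ 𝟙 as the composite A ≅ A ⊗ 𝟙 ⟶(A ◁ coev) A ⊗ (A ⊗ Aᘁ) ≅(associator) (A ⊗ A) ⊗ Aᘁ ⟶(μ ▷ Aᘁ) A ⊗ Aᘁ ≅(braiding) Aᘁ ⊗ A ⟶(ev) 𝟙. Then the trace pairing μ ≫ t : A ⊗ A ⟶ 𝟙 is symmetric: (β_{A,A}).hom ≫ μ ≫ t = μ ≫ t, where β_{A,A} is the braiding on A ⊗ A. -/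

import Mathlib

open CategoryTheory MonoidalCategory

/-- The trace form of a monoid object `A` with a right dual `Aᘁ` (exact pairing given by
`coev : 𝟙 ⟶ A ⊗ Aᘁ` and `ev : Aᘁ ⊗ A ⟶ 𝟙`), namely the composite
`A ≅ A ⊗ 𝟙 ⟶ A ⊗ (A ⊗ Aᘁ) ≅ (A ⊗ A) ⊗ Aᘁ ⟶ A ⊗ Aᘁ ≅ Aᘁ ⊗ A ⟶ 𝟙`. -/
noncomputable def Mon_.traceForm {C : Type*} [Category C] [MonoidalCategory C]
    [SymmetricCategory C] (A : Mon C) (Ad : C) [ExactPairing A.X Ad] :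
    A.X ⟶ 𝟙_ C :=
  (ρ_ A.X).inv ≫ (A.X ◁ η_ A.X Ad) ≫ (α_ A.X A.X Ad).inv ≫ (A.mon.mul ▷ Ad) ≫
    (β_ A.X Ad).hom ≫ ε_ A.X Ad

open CategoryTheory MonoidalCategory BraidedCategory ExactPairing

section Aux

variable {C : Type*} [Category C] [MonoidalCategory C] [SymmetricCategory C]
  (A : Mon C) (Ad : C) [ExactPairing A.X Ad]

/-- partial transpose of multiplication: `(d, x) ↦ Σ ε(d, x·c₁) ⊗ c₂`. -/
noncomputable def mtAux : Ad ⊗ A.X ⟶ Ad :=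
  (ρ_ (Ad ⊗ A.X)).inv ≫ (((Ad ⊗ A.X) : C) ◁ η_ A.X Ad) ≫ (α_ Ad A.X (A.X ⊗ Ad)).hom ≫
    (Ad ◁ (α_ A.X A.X Ad).inv) ≫ (Ad ◁ (A.mon.mul ▷ Ad)) ≫ (α_ Ad A.X Ad).inv ≫
    (ε_ A.X Ad ▷ Ad) ≫ (λ_ Ad).hom

set_option linter.unusedSectionVars false

lemma lemE : (α_ Ad A.X A.X).inv ≫ (mtAux A Ad ▷ A.X) ≫ ε_ A.X Ad =
    (Ad ◁ A.mon.mul) ≫ ε_ A.X Ad := by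
  calc (α_ Ad A.X A.X).inv ≫ (mtAux A Ad ▷ A.X) ≫ ε_ A.X Ad
    _ = 𝟙 _ ⊗≫ (((Ad ⊗ A.X) : C) ◁ η_ A.X Ad) ▷ A.X ⊗≫ (Ad ◁ (A.mon.mul ▷ Ad)) ▷ A.X ⊗≫
        (ε_ A.X Ad ▷ ((Ad ⊗ A.X) : C) ≫ 𝟙_ C ◁ ε_ A.X Ad) ⊗≫ 𝟙 _ := by
      dsimp [mtAux]; monoidal
    _ = 𝟙 _ ⊗≫ (((Ad ⊗ A.X) : C) ◁ η_ A.X Ad) ▷ A.X ⊗≫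
        ((Ad ◁ A.mon.mul) ▷ ((Ad ⊗ A.X) : C) ≫ ((Ad ⊗ A.X) : C) ◁ ε_ A.X Ad) ⊗≫
        ε_ A.X Ad ▷ 𝟙_ C ⊗≫ 𝟙 _ := by
      rw [← whisker_exchange]; monoidal
    _ = 𝟙 _ ⊗≫ (((Ad ⊗ A.X) : C) ◁ η_ A.X Ad) ▷ A.X ⊗≫
        ((((Ad ⊗ (A.X ⊗ A.X)) : C) ◁ ε_ A.X Ad) ≫ (Ad ◁ A.mon.mul) ▷ 𝟙_ C) ⊗≫
        ε_ A.X Ad ▷ 𝟙_ C ⊗≫ 𝟙 _ := by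
      rw [whisker_exchange]
    _ = 𝟙 _ ⊗≫ ((Ad ⊗ A.X : C)) ◁ (η_ A.X Ad ▷ A.X ⊗≫ A.X ◁ ε_ A.X Ad) ⊗≫
        (Ad ◁ A.mon.mul) ≫ ε_ A.X Ad := by
      monoidal
    _ = (Ad ◁ A.mon.mul) ≫ ε_ A.X Ad := by
      rw [evaluation_coevaluation'']; monoidal

lemma lemC : (ρ_ A.X).inv ≫ (A.X ◁ η_ A.X Ad) ≫ (α_ A.X A.X Ad).inv ≫ (A.mon.mul ▷ Ad) =
    (λ_ A.X).inv ≫ (η_ A.X Ad ▷ A.X) ≫ (α_ A.X Ad A.X).hom ≫ (A.X ◁ mtAux A Ad) := by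
  symm
  calc (λ_ A.X).inv ≫ (η_ A.X Ad ▷ A.X) ≫ (α_ A.X Ad A.X).hom ≫ (A.X ◁ mtAux A Ad)
    _ = 𝟙 _ ⊗≫ (η_ A.X Ad ▷ (A.X ⊗ 𝟙_ C) ≫ ((A.X ⊗ Ad) : C) ◁ (A.X ◁ η_ A.X Ad)) ⊗≫
        (((A.X ⊗ Ad) : C) ◁ (A.mon.mul ▷ Ad)) ⊗≫ (A.X ◁ (ε_ A.X Ad ▷ Ad)) ⊗≫ 𝟙 _ := by
      dsimp [mtAux]; monoidal
    _ = 𝟙 _ ⊗≫ (A.X ◁ η_ A.X Ad) ⊗≫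
        (η_ A.X Ad ▷ ((A.X ⊗ A.X) ⊗ Ad) ≫ ((A.X ⊗ Ad) : C) ◁ (A.mon.mul ▷ Ad)) ⊗≫
        (A.X ◁ (ε_ A.X Ad ▷ Ad)) ⊗≫ 𝟙 _ := by
      rw [← whisker_exchange]; monoidal
    _ = 𝟙 _ ⊗≫ (A.X ◁ η_ A.X Ad) ⊗≫ (A.mon.mul ▷ Ad) ⊗≫
        ((η_ A.X Ad ▷ A.X ⊗≫ A.X ◁ ε_ A.X Ad) ▷ Ad) ⊗≫ 𝟙 _ := by
      rw [← whisker_exchange]; monoidal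
    _ = (ρ_ A.X).inv ≫ (A.X ◁ η_ A.X Ad) ≫ (α_ A.X A.X Ad).inv ≫ (A.mon.mul ▷ Ad) := by
      rw [evaluation_coevaluation'']; monoidal

lemma lemU (X P : C) (g : 𝟙_ C ⟶ P) :
    (λ_ X).inv ≫ g ▷ X = (ρ_ X).inv ≫ X ◁ g ≫ (β_ X P).hom := by
  calc (λ_ X).inv ≫ g ▷ X
    _ = (ρ_ X).inv ≫ (β_ X (𝟙_ C)).hom ≫ g ▷ X := by
      rw [braiding_tensorUnit_right]; simp
    _ = (ρ_ X).inv ≫ X ◁ g ≫ (β_ X P).hom := by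
      rw [braiding_naturality_right]

end Aux

set_option maxHeartbeats 1000000 in
theorem braidP {C : Type*} [Category C] [MonoidalCategory C] [SymmetricCategory C]
    (X Y Z W : C) :
    𝟙 ((X ⊗ Y) ⊗ (Z ⊗ W)) ⊗≫ X ◁ (β_ (Y ⊗ Z) W).hom ⊗≫ (β_ X W).hom ▷ (Y ⊗ Z) ⊗≫
      𝟙 ((W ⊗ X) ⊗ (Y ⊗ Z)) =
    𝟙 ((X ⊗ Y) ⊗ (Z ⊗ W)) ⊗≫ (β_ X Y).hom ▷ (Z ⊗ W) ⊗≫ Y ◁ (β_ X (Z ⊗ W)).hom ⊗≫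
      (β_ (Y ⊗ Z) (W ⊗ X)).hom ⊗≫ 𝟙 ((W ⊗ X) ⊗ (Y ⊗ Z)) := by
  rw [← cancel_mono ((α_ W X (Y ⊗ Z)).hom ≫ W ◁ (β_ (Y ⊗ Z) X).inv)]
  calc (𝟙 ((X ⊗ Y) ⊗ (Z ⊗ W)) ⊗≫ X ◁ (β_ (Y ⊗ Z) W).hom ⊗≫ (β_ X W).hom ▷ (Y ⊗ Z) ⊗≫
      𝟙 ((W ⊗ X) ⊗ (Y ⊗ Z))) ≫ ((α_ W X (Y ⊗ Z)).hom ≫ W ◁ (β_ (Y ⊗ Z) X).inv)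
    _ = 𝟙 _ ⊗≫ (𝟙 (((X ⊗ (Y ⊗ Z)) ⊗ W : C)) ⊗≫ (X ◁ (β_ (Y ⊗ Z) W).hom ⊗≫
        (β_ X W).hom ▷ (Y ⊗ Z) ⊗≫ W ◁ (β_ X (Y ⊗ Z)).hom) ⊗≫
        𝟙 (((W ⊗ (Y ⊗ Z)) ⊗ X : C))) ⊗≫ 𝟙 _ := by
      rw [← SymmetricCategory.braiding_swap_eq_inv_braiding]; monoidal
    _ = 𝟙 _ ⊗≫ ((β_ X (Y ⊗ Z)).hom ▷ W ⊗≫ (Y ⊗ Z) ◁ (β_ X W).hom ⊗≫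
        (β_ (Y ⊗ Z) W).hom ▷ X) ⊗≫ 𝟙 _ := by
      rw [← yang_baxter']; monoidal
    _ = (𝟙 ((X ⊗ Y) ⊗ (Z ⊗ W)) ⊗≫ (β_ X Y).hom ▷ (Z ⊗ W) ⊗≫ Y ◁ (β_ X (Z ⊗ W)).hom ⊗≫
        (β_ (Y ⊗ Z) (W ⊗ X)).hom ⊗≫ 𝟙 ((W ⊗ X) ⊗ (Y ⊗ Z))) ≫
        ((α_ W X (Y ⊗ Z)).hom ≫ W ◁ (β_ (Y ⊗ Z) X).inv) := by
      simp [monoidalComp]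

set_option maxHeartbeats 1000000 in
/-- In a symmetric monoidal category, the trace pairing `μ ≫ t : A ⊗ A ⟶ 𝟙` of a monoid
object `A` with dualizable underlying object is symmetric: it is invariant under
precomposition with the braiding. -/
theorem Mon_.tracePairing_symm {C : Type*} [Category C] [MonoidalCategory C]
    [SymmetricCategory C] (A : Mon C) (Ad : C) [ExactPairing A.X Ad] :
    (β_ A.X A.X).hom ≫ A.mon.mul ≫ Mon_.traceForm A Ad = A.mon.mul ≫ Mon_.traceForm A Ad := by
  have hR : A.mon.mul ≫ Mon_.traceForm A Ad =
      ((ρ_ ((A.X ⊗ A.X : C))).inv ≫ (((A.X ⊗ A.X) : C) ◁ η_ A.X Ad)) ≫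
      (𝟙 ((A.X ⊗ A.X) ⊗ (A.X ⊗ Ad)) ⊗≫ A.X ◁ (β_ (A.X ⊗ A.X) Ad).hom ⊗≫
        (β_ A.X Ad).hom ▷ (A.X ⊗ A.X) ⊗≫ 𝟙 ((Ad ⊗ A.X) ⊗ (A.X ⊗ A.X))) ≫
      ((mtAux A Ad ▷ ((A.X ⊗ A.X) : C)) ≫ (Ad ◁ A.mon.mul) ≫ ε_ A.X Ad) := by
    calc A.mon.mul ≫ Mon_.traceForm A Ad
      _ = 𝟙 _ ⊗≫ (A.mon.mul ▷ 𝟙_ C ≫ A.X ◁ η_ A.X Ad) ⊗≫ (A.mon.mul ▷ Ad) ≫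
          (β_ A.X Ad).hom ≫ ε_ A.X Ad := by
        dsimp [Mon_.traceForm]; monoidal
      _ = 𝟙 _ ⊗≫ (((A.X ⊗ A.X) : C) ◁ η_ A.X Ad ≫ A.mon.mul ▷ ((A.X ⊗ Ad) : C)) ⊗≫
          (A.mon.mul ▷ Ad) ≫ (β_ A.X Ad).hom ≫ ε_ A.X Ad := by
        rw [whisker_exchange]
      _ = 𝟙 _ ⊗≫ (((A.X ⊗ A.X) : C) ◁ η_ A.X Ad) ⊗≫
          (((A.mon.mul ▷ A.X) ≫ A.mon.mul) ▷ Ad ≫ (β_ A.X Ad).hom) ≫ ε_ A.X Ad := by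
        monoidal
      _ = 𝟙 _ ⊗≫ (((A.X ⊗ A.X) : C) ◁ η_ A.X Ad) ⊗≫ ((A.X ◁ A.mon.mul) ▷ Ad) ⊗≫
          (A.mon.mul ▷ Ad ≫ (β_ A.X Ad).hom) ≫ ε_ A.X Ad := by
        rw [MonObj.mul_assoc]; monoidal
      _ = 𝟙 _ ⊗≫ (((A.X ⊗ A.X) : C) ◁ η_ A.X Ad) ⊗≫
          ((A.X ◁ A.mon.mul) ▷ Ad ≫ (β_ (A.X ⊗ A.X) Ad).hom) ⊗≫
          (Ad ◁ A.mon.mul) ≫ ε_ A.X Ad := by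
        rw [braiding_naturality_left]; monoidal
      _ = 𝟙 _ ⊗≫ (((A.X ⊗ A.X) : C) ◁ η_ A.X Ad) ⊗≫
          (β_ (A.X ⊗ (A.X ⊗ A.X)) Ad).hom ⊗≫ (Ad ◁ (A.X ◁ A.mon.mul)) ⊗≫
          (Ad ◁ A.mon.mul) ≫ ε_ A.X Ad := by
        rw [braiding_naturality_left]; monoidal
      _ = 𝟙 _ ⊗≫ (((A.X ⊗ A.X) : C) ◁ η_ A.X Ad) ⊗≫
          (β_ (A.X ⊗ (A.X ⊗ A.X)) Ad).hom ⊗≫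
          ((((Ad ⊗ A.X) : C) ◁ A.mon.mul) ≫ (mtAux A Ad ▷ A.X)) ≫ ε_ A.X Ad := by
        rw [← lemE]; monoidal
      _ = 𝟙 _ ⊗≫ (((A.X ⊗ A.X) : C) ◁ η_ A.X Ad) ⊗≫
          (β_ (A.X ⊗ (A.X ⊗ A.X)) Ad).hom ⊗≫
          ((mtAux A Ad ▷ ((A.X ⊗ A.X) : C)) ≫ (Ad ◁ A.mon.mul)) ≫ ε_ A.X Ad := by
        rw [whisker_exchange]
      _ = _ := by
        rw [braiding_tensor_left_hom]; monoidal
  have hL : (β_ A.X A.X).hom ≫ A.mon.mul ≫ Mon_.traceForm A Ad =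
      ((ρ_ ((A.X ⊗ A.X : C))).inv ≫ (((A.X ⊗ A.X) : C) ◁ η_ A.X Ad)) ≫
      (𝟙 ((A.X ⊗ A.X) ⊗ (A.X ⊗ Ad)) ⊗≫ (β_ A.X A.X).hom ▷ (A.X ⊗ Ad) ⊗≫
        A.X ◁ (β_ A.X (A.X ⊗ Ad)).hom ⊗≫ (β_ (A.X ⊗ A.X) (Ad ⊗ A.X)).hom ⊗≫
        𝟙 ((Ad ⊗ A.X) ⊗ (A.X ⊗ A.X))) ≫
      ((mtAux A Ad ▷ ((A.X ⊗ A.X) : C)) ≫ (Ad ◁ A.mon.mul) ≫ ε_ A.X Ad) := by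
    calc (β_ A.X A.X).hom ≫ A.mon.mul ≫ Mon_.traceForm A Ad
      _ = (β_ A.X A.X).hom ⊗≫ (A.mon.mul ▷ 𝟙_ C ≫ A.X ◁ η_ A.X Ad) ⊗≫ (A.mon.mul ▷ Ad) ≫
          (β_ A.X Ad).hom ≫ ε_ A.X Ad := by
        dsimp [Mon_.traceForm]; monoidal
      _ = (β_ A.X A.X).hom ⊗≫ (((A.X ⊗ A.X) : C) ◁ η_ A.X Ad ≫ A.mon.mul ▷ ((A.X ⊗ Ad) : C)) ⊗≫
          (A.mon.mul ▷ Ad) ≫ (β_ A.X Ad).hom ≫ ε_ A.X Ad := by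
        rw [whisker_exchange]
      _ = (β_ A.X A.X).hom ⊗≫ (((A.X ⊗ A.X) : C) ◁ η_ A.X Ad) ⊗≫
          (((A.mon.mul ▷ A.X) ≫ A.mon.mul) ▷ Ad ≫ (β_ A.X Ad).hom) ≫ ε_ A.X Ad := by
        monoidal
      _ = (β_ A.X A.X).hom ⊗≫
          (A.X ◁ ((ρ_ A.X).inv ≫ (A.X ◁ η_ A.X Ad) ≫ (α_ A.X A.X Ad).inv ≫ (A.mon.mul ▷ Ad))) ⊗≫
          (A.mon.mul ▷ Ad ≫ (β_ A.X Ad).hom) ≫ ε_ A.X Ad := by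
        rw [MonObj.mul_assoc]; monoidal
      _ = (β_ A.X A.X).hom ⊗≫
          (A.X ◁ ((λ_ A.X).inv ≫ (η_ A.X Ad ▷ A.X) ≫ (α_ A.X Ad A.X).hom ≫
            (A.X ◁ mtAux A Ad))) ⊗≫
          (A.mon.mul ▷ Ad ≫ (β_ A.X Ad).hom) ≫ ε_ A.X Ad := by
        rw [lemC]
      _ = (β_ A.X A.X).hom ⊗≫ (A.X ◁ ((λ_ A.X).inv ≫ (η_ A.X Ad ▷ A.X))) ⊗≫
          ((((A.X ⊗ A.X) : C) ◁ mtAux A Ad) ≫ (β_ (A.X ⊗ A.X) Ad).hom) ⊗≫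
          (Ad ◁ A.mon.mul) ≫ ε_ A.X Ad := by
        rw [braiding_naturality_left]; monoidal
      _ = (β_ A.X A.X).hom ⊗≫ (A.X ◁ ((λ_ A.X).inv ≫ (η_ A.X Ad ▷ A.X))) ⊗≫
          (β_ (A.X ⊗ A.X) ((Ad ⊗ A.X) : C)).hom ⊗≫
          ((mtAux A Ad ▷ ((A.X ⊗ A.X) : C)) ≫ (Ad ◁ A.mon.mul)) ≫ ε_ A.X Ad := by
        rw [braiding_naturality_right]; monoidal
      _ = (β_ A.X A.X).hom ⊗≫
          (A.X ◁ ((ρ_ A.X).inv ≫ A.X ◁ η_ A.X Ad ≫ (β_ A.X ((A.X ⊗ Ad) : C)).hom)) ⊗≫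
          (β_ (A.X ⊗ A.X) ((Ad ⊗ A.X) : C)).hom ⊗≫
          ((mtAux A Ad ▷ ((A.X ⊗ A.X) : C)) ≫ (Ad ◁ A.mon.mul)) ≫ ε_ A.X Ad := by
        rw [← lemU]
      _ = 𝟙 _ ⊗≫ ((β_ A.X A.X).hom ▷ 𝟙_ C ≫ ((A.X ⊗ A.X) : C) ◁ η_ A.X Ad) ⊗≫
          (A.X ◁ (β_ A.X ((A.X ⊗ Ad) : C)).hom) ⊗≫
          (β_ (A.X ⊗ A.X) ((Ad ⊗ A.X) : C)).hom ⊗≫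
          ((mtAux A Ad ▷ ((A.X ⊗ A.X) : C)) ≫ (Ad ◁ A.mon.mul)) ≫ ε_ A.X Ad := by
        monoidal
      _ = 𝟙 _ ⊗≫ (((A.X ⊗ A.X) : C) ◁ η_ A.X Ad ≫ (β_ A.X A.X).hom ▷ ((A.X ⊗ Ad) : C)) ⊗≫
          (A.X ◁ (β_ A.X ((A.X ⊗ Ad) : C)).hom) ⊗≫
          (β_ (A.X ⊗ A.X) ((Ad ⊗ A.X) : C)).hom ⊗≫
          ((mtAux A Ad ▷ ((A.X ⊗ A.X) : C)) ≫ (Ad ◁ A.mon.mul)) ≫ ε_ A.X Ad := by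
        rw [← whisker_exchange]
      _ = _ := by
        monoidal
  rw [hL, hR, braidP]
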